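/- arXiv:0904.2848 — 2 statements merged into one kernel-verified Lean document; each statement's English description precedes it below -/
import Mathlib

section
/- Every nonzero simple left submodule of the M_e(D)-module W^e (where W is a vector space over a division ring D) has the form K_1·ω̃ = { column vector (a_{11}ω, a_{21}ω, ..., a_{e1}ω) : a_{i1} ∈ D } for some ω ∈ W, where K_1 is the left ideal of M_e(D) consisting of matrices supported on the first column. -/
/-- The action of the matrix ring `M_e(D)` on column vectors `W^e`. -/
noncomputable instance matrixSMul {D : Type*} [DivisionRing D] {e : ℕ}
    {W : Type*} [AddCommGroup W] [Module D W] :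
    SMul (Matrix (Fin e) (Fin e) D) (Fin e → W) :=
  ⟨fun A v i => ∑ j, A i j • v j⟩

lemma matrixSMul_apply {D : Type*} [DivisionRing D] {e : ℕ}
    {W : Type*} [AddCommGroup W] [Module D W]
    (A : Matrix (Fin e) (Fin e) D) (v : Fin e → W) (i : Fin e) :
    (A • v) i = ∑ j, A i j • v j := rfl

/-- `W^e` is a left module over `M_e(D)`. -/
noncomputable instance matrixModule {D : Type*} [DivisionRing D] {e : ℕ}
    {W : Type*} [AddCommGroup W] [Module D W] :
    Module (Matrix (Fin e) (Fin e) D) (Fin e → W) where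
  one_smul v := funext fun i => by
    rw [matrixSMul_apply]
    simp [Matrix.one_apply, ite_smul]
  mul_smul A B v := funext fun i => by
    simp only [matrixSMul_apply, Matrix.mul_apply, Finset.sum_smul, smul_smul,
      Finset.smul_sum]
    exact Finset.sum_comm
  smul_zero A := funext fun i => by
    rw [matrixSMul_apply]; simp
  smul_add A v w := funext fun i => by
    simp only [matrixSMul_apply, Pi.add_apply, smul_add, Finset.sum_add_distrib]
  add_smul A B v := funext fun i => by
    simp only [matrixSMul_apply, Matrix.add_apply, add_smul, Finset.sum_add_distrib,
      Pi.add_apply]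
  zero_smul v := funext fun i => by
    rw [matrixSMul_apply]; simp

/-- Every nonzero simple `M_e(D)`-submodule of `W^e` has the form
`K₁ · ω̃ = {(a₁ • ω, …, a_e • ω) : aᵢ ∈ D}` for some `ω ∈ W`. -/
theorem simple_submodule_of_matrix_module
    {D : Type*} [DivisionRing D] {e : ℕ} {W : Type*} [AddCommGroup W] [Module D W]
    (Δ : Submodule (Matrix (Fin e) (Fin e) D) (Fin e → W))
    (hΔ : IsSimpleModule (Matrix (Fin e) (Fin e) D) Δ) :
    ∃ ω : W, (Δ : Set (Fin e → W)) =
      {v : Fin e → W | ∃ a : Fin e → D, ∀ i, v i = a i • ω} := by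
  haveI := hΔ
  haveI : Nontrivial Δ := IsSimpleModule.nontrivial (Matrix (Fin e) (Fin e) D) Δ
  obtain ⟨⟨v, hv⟩, hvne⟩ := exists_ne (0 : Δ)
  have hv0 : v ≠ 0 := fun h => hvne (Subtype.ext h)
  obtain ⟨k, hk⟩ := Function.ne_iff.mp hv0
  have hk' : v k ≠ 0 := by simpa using hk
  refine ⟨v k, ?_⟩
  set S : Submodule (Matrix (Fin e) (Fin e) D) (Fin e → W) :=
    { carrier := {w : Fin e → W | ∃ a : Fin e → D, ∀ i, w i = a i • v k}
      add_mem' := by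
        rintro w₁ w₂ ⟨a, ha⟩ ⟨b, hb⟩
        exact ⟨a + b, fun i => by simp [ha i, hb i, add_smul]⟩
      zero_mem' := ⟨0, fun i => by simp⟩
      smul_mem' := by
        rintro A w ⟨a, ha⟩
        refine ⟨fun i => ∑ j, A i j * a j, fun i => ?_⟩
        rw [matrixSMul_apply]
        simp only [ha, smul_smul, Finset.sum_smul] } with hS
  have hSΔ : (S : Set (Fin e → W)) ⊆ (Δ : Set (Fin e → W)) := by
    rintro w ⟨a, ha⟩
    have hw : w = (Matrix.of fun i j => if j = k then a i else 0) • v := by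
      funext i
      rw [matrixSMul_apply]
      simp [ha i, Finset.sum_ite_eq', ite_smul]
    rw [hw]
    exact Δ.smul_mem _ hv
  have hΔS : (Δ : Set (Fin e → W)) ⊆ (S : Set (Fin e → W)) := by
    set T : Submodule (Matrix (Fin e) (Fin e) D) Δ := S.comap Δ.subtype with hT
    have hTne : T ≠ ⊥ := by
      intro hbot
      have hmem : ((Matrix.single k k (1 : D)) • v) ∈ S := by
        refine ⟨fun i => if i = k then 1 else 0, fun i => ?_⟩
        rw [matrixSMul_apply]
        rcases eq_or_ne i k with h | h
        · subst h
          simp [Matrix.single, Finset.sum_ite_eq', ite_smul]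
        · simp [Matrix.single, h, Ne.symm h, ite_smul]
      have hu : (⟨(Matrix.single k k (1 : D)) • v,
          Δ.smul_mem _ hv⟩ : Δ) ∈ T := hmem
      rw [hbot, Submodule.mem_bot] at hu
      have h0 : (Matrix.single k k (1 : D)) • v = 0 := by
        simpa [Subtype.ext_iff] using hu
      have h1 := congrFun h0 k
      rw [matrixSMul_apply] at h1
      apply hk'
      simpa [Matrix.single, Finset.sum_ite_eq', ite_smul] using h1
    have hTtop : T = ⊤ := (hΔ.1.2 T).resolve_left hTne
    intro x hx
    have hxT : (⟨x, hx⟩ : Δ) ∈ T := by rw [hTtop]; trivial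
    exact hxT
  exact le_antisymm hΔS hSΔ
end

section
/- Let R = ℤ[i] and let c₁, c₂ ∈ R be nonzero, with D = gcd(c₁, c₂). Then gcd(c₁²/D, c₂) is an associate of D, and consequently the system of congruences r₁c₁ + r₂c₂ ≡ 0 (mod γ), r₂c₁ + r₃c₂ ≡ c₁ (mod γ) has a solution r₁, r₂, r₃ ∈ R for every nonzero modulus γ ∈ R. -/
/-- In `ℤ[i]`, for nonzero `c₁, c₂` with `D = gcd(c₁, c₂)`, the gcd
`gcd(c₁²/D, c₂)` is an associate of `D`; consequently the system of congruences
`r₁c₁ + r₂c₂ ≡ 0 (mod γ)`, `r₂c₁ + r₃c₂ ≡ c₁ (mod γ)` is solvable in `ℤ[i]` for every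
nonzero modulus `γ`. -/
theorem gaussianInt_gcd_congruences
    (c₁ c₂ : GaussianInt) (h₁ : c₁ ≠ 0) (h₂ : c₂ ≠ 0)
    (D : GaussianInt) (hD : D = EuclideanDomain.gcd c₁ c₂) :
    Associated (EuclideanDomain.gcd (c₁ ^ 2 / D) c₂) D ∧
    ∀ γ : GaussianInt, γ ≠ 0 →
      ∃ r₁ r₂ r₃ : GaussianInt,
        γ ∣ (r₁ * c₁ + r₂ * c₂) ∧ γ ∣ (r₂ * c₁ + r₃ * c₂ - c₁) := by
  have hDc₁ : D ∣ c₁ := hD ▸ EuclideanDomain.gcd_dvd_left c₁ c₂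
  have hDc₂ : D ∣ c₂ := hD ▸ EuclideanDomain.gcd_dvd_right c₁ c₂
  have hD0 : D ≠ 0 := fun h => h₁ (by simpa [h] using hDc₁)
  obtain ⟨e₁, he₁⟩ := hDc₁
  obtain ⟨e₂, he₂⟩ := hDc₂
  set A := EuclideanDomain.gcdA c₁ c₂ with hA
  set B := EuclideanDomain.gcdB c₁ c₂ with hB
  have hbez : D = c₁ * A + c₂ * B := hD ▸ EuclideanDomain.gcd_eq_gcd_ab c₁ c₂
  have hq : c₁ ^ 2 / D = e₁ * c₁ := by
    rw [show c₁ ^ 2 = D * (e₁ * c₁) by rw [he₁]; ring,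
      mul_div_cancel_left₀ _ hD0]
  constructor
  · apply associated_of_dvd_dvd
    · -- gcd (c₁²/D) c₂ ∣ D
      have key : D * D = D * (A ^ 2 * (e₁ * c₁) + (2 * A * B * e₁ + B ^ 2 * e₂) * c₂) := by
        conv_lhs => rw [hbez]
        rw [he₁, he₂]; ring
      have hDeq : D = A ^ 2 * (e₁ * c₁) + (2 * A * B * e₁ + B ^ 2 * e₂) * c₂ :=
        mul_left_cancel₀ hD0 key
      have h' : EuclideanDomain.gcd (c₁ ^ 2 / D) c₂ ∣
          A ^ 2 * (e₁ * c₁) + (2 * A * B * e₁ + B ^ 2 * e₂) * c₂ :=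
        dvd_add
          (Dvd.dvd.mul_left (hq ▸ EuclideanDomain.gcd_dvd_left (c₁ ^ 2 / D) c₂) _)
          (Dvd.dvd.mul_left (EuclideanDomain.gcd_dvd_right (c₁ ^ 2 / D) c₂) _)
      rwa [← hDeq] at h'
    · -- D ∣ gcd (c₁²/D) c₂
      refine EuclideanDomain.dvd_gcd ?_ ⟨e₂, he₂⟩
      rw [hq]
      exact Dvd.dvd.mul_left ⟨e₁, he₁⟩ e₁
  · intro γ _
    refine ⟨-(A * e₂), A * e₁, B * e₁, ?_, ?_⟩
    · have : -(A * e₂) * c₁ + A * e₁ * c₂ = 0 := by rw [he₁, he₂]; ring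
      rw [this]; exact dvd_zero γ
    · have : A * e₁ * c₁ + B * e₁ * c₂ - c₁ = 0 := by
        have : c₁ = e₁ * D := by rw [he₁]; ring
        calc A * e₁ * c₁ + B * e₁ * c₂ - c₁ = e₁ * (c₁ * A + c₂ * B) - c₁ := by ring
        _ = 0 := by rw [← hbez, ← this]; ring
      rw [this]; exact dvd_zero γ
end
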